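/- Let 3 ≤ r ≤ n. Let π₀ = B(V) be a q-subgeometry of PG(r-1,q^n) and l_∞ = PG(U) a line tangent to π₀ with centre T and not contained in the extension of any hyperplane of π₀, and write S(π₀,l_∞) = {T} ∪ A with T ∉ A. Let P be any point of A. Then there exist vectors u, v ∈ U and elements ρ₁, …, ρ_{r-2} ∈ L such that 1, ρ₁, …, ρ_{r-2} are linearly independent over K, T = L·u, P = L·v, and A = { L·(x·u + (∑_{i=1}^{r-2} y_i ρ_i)·u + v) : x, y₁, …, y_{r-2} ∈ K }. -/

import Mathlib

open Submodule Module

/-- `BSet L X` is the set of projective points (1-dimensional `L`-subspaces of `W`)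
spanned by the nonzero vectors of `X`. -/
def BSet (L : Type*) [Field L] {W : Type*} [AddCommGroup W] [Module L W]
    (X : Set W) : Set (Submodule L W) :=
  {P | ∃ x ∈ X, x ≠ 0 ∧ P = Submodule.span L {x}}

/-- The splash of the `q`-subgeometry `B(V)` of `PG(W)` on the line `PG(U)`:
the set of points of `PG(U)` lying in the `L`-span (extension) of some hyperplane
(`(r-1)`-dimensional `K`-subspace) of `V`. -/
def Splash (K L : Type*) [Field K] [Field L] [Algebra K L]
    {W : Type*} [AddCommGroup W] [Module L W] [Module K W] [IsScalarTower K L W]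
    (V : Submodule K W) (U : Submodule L W) (r : ℕ) : Set (Submodule L W) :=
  {P | Module.finrank L P = 1 ∧ P ≤ U ∧
    ∃ H : Submodule K W, H ≤ V ∧ Module.finrank K H = r - 1 ∧
      P ≤ Submodule.span L (H : Set W)}

section Aux
variable {K L : Type*} [Field K] [Field L] [Algebra K L] {r : ℕ}

/-- The `L`-functional with `K`-rational coefficients `a` w.r.t. the basis `eb`. -/
noncomputable def funl (eb : Basis (Fin r) L (Fin r → L)) :
    (Fin r → K) →ₗ[K] ((Fin r → L) →ₗ[L] L) :=
  (eb.constr K).toLinearMap ∘ₗ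
    (LinearMap.pi fun i => (Algebra.linearMap K L).comp (LinearMap.proj i))

theorem funl_basis (eb : Basis (Fin r) L (Fin r → L)) (a : Fin r → K) (i : Fin r) :
    funl eb a (eb i) = algebraMap K L (a i) := by
  simp [funl, Basis.constr_basis]

theorem funl_sum (eb : Basis (Fin r) L (Fin r → L)) (a c : Fin r → K) :
    funl eb a (∑ i, c i • eb i) = algebraMap K L (∑ i, c i * a i) := by
  rw [map_sum, map_sum]
  congr 1
  funext i
  rw [LinearMap.map_smul_of_tower, funl_basis, Algebra.smul_def, ← map_mul]

theorem funl_apply (eb : Basis (Fin r) L (Fin r → L)) (a : Fin r → K) (w : Fin r → L) :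
    funl eb a w = ∑ i, eb.repr w i * algebraMap K L (a i) := by
  conv_lhs => rw [← eb.sum_repr w]
  rw [map_sum]
  congr 1
  funext i
  rw [map_smul, funl_basis, smul_eq_mul]

/-- A `K`-basis of `V` that is also an `L`-basis of the ambient space. -/
theorem exists_good_basis (V : Submodule K (Fin r → L)) [Module.Finite K V]
    (hVrank : Module.finrank K V = r)
    (hVspan : Submodule.span L (V : Set (Fin r → L)) = ⊤) :
    ∃ eb : Basis (Fin r) L (Fin r → L), (∀ i, eb i ∈ V) ∧
      Submodule.span K (Set.range (eb : Fin r → (Fin r → L))) = V := by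
  let b : Basis (Fin r) K V := Module.finBasisOfFinrankEq K V hVrank
  let e : Fin r → (Fin r → L) := fun i => (b i : Fin r → L)
  have hspanKe : Submodule.span K (Set.range e) = V := by
    have h1 : Submodule.map V.subtype (Submodule.span K (Set.range b)) =
        Submodule.span K (Set.range e) := by
      rw [Submodule.map_span]
      congr 1
      ext x
      simp [e, Set.range_comp]
    rw [b.span_eq, Submodule.map_top, Submodule.range_subtype] at h1
    exact h1.symm
  have htop : ⊤ ≤ Submodule.span L (Set.range e) := by
    rw [← hVspan, Submodule.span_le]
    intro x hx
    rw [← hspanKe] at hx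
    have : Submodule.span K (Set.range e) ≤
        (Submodule.span L (Set.range e)).restrictScalars K :=
      Submodule.span_le.2 Submodule.subset_span
    exact this hx
  have hcard : Fintype.card (Fin r) = finrank L (Fin r → L) := by simp
  let eb := basisOfTopLeSpanOfCardEqFinrank e htop hcard
  have hebe : (eb : Fin r → (Fin r → L)) = e := by
    exact coe_basisOfTopLeSpanOfCardEqFinrank e htop hcard
  refine ⟨eb, ?_, ?_⟩
  · intro i
    rw [show eb i = e i from congrFun hebe i]
    exact (b i).2
  · rw [hebe, hspanKe]

variable [FiniteDimensional K (Fin r → L)]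

theorem exists_hyperplane (eb : Basis (Fin r) L (Fin r → L)) (V : Submodule K (Fin r → L))
    (heV : ∀ i, eb i ∈ V) (hVrank : finrank K V = r) (hr : 3 ≤ r)
    {a : Fin r → K} (ha : a ≠ 0) :
    ∃ H : Submodule K (Fin r → L), H ≤ V ∧ finrank K H = r - 1 ∧
      LinearMap.ker (funl eb a) ≤ Submodule.span L (H : Set (Fin r → L)) := by
  obtain ⟨i₀, hi₀⟩ : ∃ i, a i ≠ 0 := by
    by_contra h; push_neg at h; exact ha (funext h)
  have hli : LinearIndependent K fun i => (⟨eb i, heV i⟩ : V) := by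
    have h1 : LinearIndependent L eb := eb.linearIndependent
    have h2 : LinearIndependent K eb := by
      apply h1.restrict_scalars
      have : (fun r : K => r • (1 : L)) = algebraMap K L :=
        funext fun r => (Algebra.algebraMap_eq_smul_one r).symm
      rw [this]
      exact RingHom.injective _
    exact h2.of_comp V.subtype
  haveI : Nonempty (Fin r) := ⟨⟨0, by omega⟩⟩
  let bV : Basis (Fin r) K V :=
    basisOfLinearIndependentOfCardEqFinrank hli (by simp [hVrank])
  have hbV : ∀ i, (bV i : Fin r → L) = eb i := by
    intro i
    simp [bV]
  let θ : V →ₗ[K] K := bV.constr K a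
  have key : ∀ x : V, funl eb a (x : Fin r → L) = algebraMap K L (θ x) := by
    have : ((funl eb a).restrictScalars K).comp V.subtype =
        (Algebra.linearMap K L).comp θ := by
      apply bV.ext
      intro i
      simp only [LinearMap.comp_apply, LinearMap.restrictScalars_apply, Submodule.subtype_apply,
        Algebra.linearMap_apply, θ, Basis.constr_basis, hbV, funl_basis]
    intro x
    exact LinearMap.congr_fun this x
  have hθ0 : θ (bV i₀) = a i₀ := by simp [θ, Basis.constr_basis]
  have hrange : LinearMap.range θ = ⊤ := by
    rw [LinearMap.range_eq_top]
    intro k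
    refine ⟨(k * (a i₀)⁻¹) • bV i₀, ?_⟩
    rw [map_smul, hθ0, smul_eq_mul, mul_assoc, inv_mul_cancel₀ hi₀, mul_one]
  have hker : finrank K (LinearMap.ker θ) = r - 1 := by
    have h := LinearMap.finrank_range_add_finrank_ker θ
    rw [hrange, hVrank] at h
    simp only [finrank_top, Module.finrank_self] at h
    omega
  refine ⟨Submodule.map V.subtype (LinearMap.ker θ), Submodule.map_subtype_le _ _, ?_, ?_⟩
  · rw [Submodule.finrank_map_subtype_eq, hker]
  · intro w hw
    rw [LinearMap.mem_ker] at hw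
    set g : Fin r → (Fin r → L) := fun j => eb j - algebraMap K L (a j / a i₀) • eb i₀ with hg
    have hgH : ∀ j, g j ∈ Submodule.map V.subtype (LinearMap.ker θ) := by
      intro j
      have hgV : g j ∈ V := by
        apply sub_mem (heV j)
        rw [algebraMap_smul]
        exact Submodule.smul_mem V _ (heV i₀)
      refine ⟨⟨g j, hgV⟩, ?_, rfl⟩
      show θ ⟨g j, hgV⟩ = 0
      have h2 : funl eb a (g j) = 0 := by
        have hai₀ : algebraMap K L (a i₀) ≠ 0 :=
          fun h => hi₀ (RingHom.injective (algebraMap K L) (by rw [h, map_zero]))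
        simp only [hg, map_sub, map_smul, funl_basis, smul_eq_mul, map_div₀]
        rw [div_mul_eq_mul_div, mul_div_assoc, div_self hai₀, mul_one, sub_self]
      rw [key ⟨g j, hgV⟩] at h2
      exact RingHom.injective (algebraMap K L) (by rw [h2, map_zero])
    have hsum : ∑ j, eb.repr w j • g j = w := by
      have hfw : ∑ j, eb.repr w j * algebraMap K L (a j) = 0 := by
        rw [← funl_apply]; exact hw
      simp only [hg, smul_sub, Finset.sum_sub_distrib]
      rw [eb.sum_repr w]
      have h4 : ∑ j, eb.repr w j • algebraMap K L (a j / a i₀) • eb i₀ =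
          (∑ j, eb.repr w j * (algebraMap K L (a j) / algebraMap K L (a i₀))) • eb i₀ := by
        rw [Finset.sum_smul]
        congr 1; funext j
        rw [map_div₀, smul_smul]
      rw [h4]
      have h3 : (∑ j, eb.repr w j * (algebraMap K L (a j) / algebraMap K L (a i₀))) = 0 := by
        have h5 : ∀ j, eb.repr w j * (algebraMap K L (a j) / algebraMap K L (a i₀)) =
            (eb.repr w j * algebraMap K L (a j)) / algebraMap K L (a i₀) := by
          intro j; ring
        rw [Finset.sum_congr rfl (fun j _ => h5 j), ← Finset.sum_div, hfw, zero_div]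
      rw [h3, zero_smul, sub_zero]
    rw [← hsum]
    exact Submodule.sum_mem _ fun j _ =>
      Submodule.smul_mem _ _ (Submodule.subset_span (hgH j))

theorem exists_functional (eb : Basis (Fin r) L (Fin r → L)) (V : Submodule K (Fin r → L))
    (heV : ∀ i, eb i ∈ V) (hVrank : finrank K V = r)
    (hVspan : Submodule.span L (V : Set (Fin r → L)) = ⊤)
    {H : Submodule K (Fin r → L)} (hHV : H ≤ V) (hHrank : finrank K H = r - 1) (hr : 3 ≤ r)
    (hne : Submodule.span L (H : Set (Fin r → L)) ≠ ⊤) :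
    ∃ a : Fin r → K, a ≠ 0 ∧
      Submodule.span L (H : Set (Fin r → L)) ≤ LinearMap.ker (funl eb a) := by
  obtain ⟨φ, φ0, hφ⟩ := Submodule.exists_dual_map_eq_bot_of_lt_top
    (lt_top_iff_ne_top.2 hne) inferInstance
  have hkerφ : Submodule.span L (H : Set (Fin r → L)) ≤ LinearMap.ker φ := by
    intro x hx
    rw [LinearMap.mem_ker]
    have h1 : φ x ∈ Submodule.map φ (Submodule.span L (H : Set (Fin r → L))) :=
      Submodule.mem_map_of_mem hx
    rw [hφ] at h1
    exact h1
  have hx₀ : ∃ x₀ ∈ V, φ x₀ ≠ 0 := by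
    by_contra hc
    push_neg at hc
    apply φ0
    have h1 : (⊤ : Submodule L (Fin r → L)) ≤ LinearMap.ker φ := by
      rw [← hVspan]
      exact Submodule.span_le.2 fun x hx => hc x hx
    exact LinearMap.ker_eq_top.mp (top_le_iff.mp h1)
  obtain ⟨x₀, hx₀V, hφx₀⟩ := hx₀
  have hx₀0 : x₀ ≠ 0 := fun h => hφx₀ (by rw [h, map_zero])
  have hφH : ∀ x ∈ H, φ x = 0 := fun x hx => hkerφ (Submodule.subset_span hx)
  have hinf : H ⊓ Submodule.span K {x₀} = ⊥ := by
    rw [eq_bot_iff]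
    rintro y ⟨hyH, hyx⟩
    obtain ⟨k, rfl⟩ := Submodule.mem_span_singleton.mp hyx
    have h1 : φ (k • x₀) = k • φ x₀ := LinearMap.map_smul_of_tower φ k x₀
    rw [hφH _ hyH] at h1
    rcases smul_eq_zero.mp h1.symm with hk | hbad
    · simp [hk]
    · exact absurd hbad hφx₀
  have hsup : H ⊔ Submodule.span K {x₀} = V := by
    apply Submodule.eq_of_le_of_finrank_eq
      (sup_le hHV (Submodule.span_le.2 (Set.singleton_subset_iff.2 hx₀V)))
    have h1 := Submodule.finrank_sup_add_finrank_inf_eq H (Submodule.span K {x₀})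
    rw [hinf, hHrank, finrank_span_singleton hx₀0, finrank_bot] at h1
    rw [hVrank]
    omega
  set ψ : (Fin r → L) →ₗ[L] L := (φ x₀)⁻¹ • φ with hψ
  have hψx₀ : ψ x₀ = 1 := by
    rw [hψ, LinearMap.smul_apply, smul_eq_mul, inv_mul_cancel₀ hφx₀]
  have hψH : ∀ x ∈ H, ψ x = 0 := by
    intro x hx
    rw [hψ, LinearMap.smul_apply, hφH x hx, smul_zero]
  have hkey : ∀ x ∈ V, ∃ k : K, ψ x = algebraMap K L k := by
    intro x hx
    rw [← hsup] at hx
    obtain ⟨h, hh, z, hz, rfl⟩ := Submodule.mem_sup.mp hx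
    obtain ⟨k, rfl⟩ := Submodule.mem_span_singleton.mp hz
    refine ⟨k, ?_⟩
    rw [map_add, hψH h hh, zero_add, LinearMap.map_smul_of_tower, hψx₀,
      Algebra.algebraMap_eq_smul_one]
  choose af haf using fun i => hkey (eb i) (heV i)
  have hfa : funl eb af = ψ := by
    apply eb.ext
    intro i
    rw [funl_basis, haf i]
  refine ⟨af, ?_, ?_⟩
  · intro h0
    rw [h0, map_zero] at hfa
    have h2 := hψx₀
    rw [← hfa] at h2
    simp at h2
  · rw [hfa]
    intro x hx
    rw [LinearMap.mem_ker, hψ, LinearMap.smul_apply, hkerφ hx, smul_zero]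

/-- Extract a spanning vector from a rank-one submodule. -/
theorem exists_span_of_finrank_one {W : Type*} [AddCommGroup W] [Module L W]
    (Q : Submodule L W) (h : finrank L Q = 1) :
    ∃ w : W, w ≠ 0 ∧ Q = Submodule.span L {w} := by
  obtain ⟨v₀, hv₀0, hv⟩ := finrank_eq_one_iff'.mp h
  refine ⟨(v₀ : W), fun h0 => hv₀0 (Subtype.ext h0), le_antisymm ?_ ?_⟩
  · intro x hx
    obtain ⟨k, hk⟩ := hv ⟨x, hx⟩
    have : k • (v₀ : W) = x := congrArg Subtype.val hk
    rw [← this]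
    exact Submodule.smul_mem _ _ (Submodule.mem_span_singleton_self _)
  · rw [Submodule.span_singleton_le_iff_mem]
    exact v₀.2

end Aux

set_option maxHeartbeats 2000000 in
/-- algebraic description of a tangent splash `{T} ∪ A` with centre
`T`: the affine part `A` admits the parametrization
`A = { L·((x + ∑ yᵢρᵢ)·u + v) : x, yᵢ ∈ K }`. -/
theorem tangent_splash_parametrization
    (K L : Type*) [Field K] [Field L] [Algebra K L] [Fintype K] [Fintype L]
    (r n : ℕ) (hr : 3 ≤ r) (hrn : r ≤ n) (hrank : Module.finrank K L = n)
    (V : Submodule K (Fin r → L))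
    (hVrank : Module.finrank K V = r)
    (hVspan : Submodule.span L (V : Set (Fin r → L)) = ⊤)
    (U : Submodule L (Fin r → L)) (hU : Module.finrank L U = 2)
    (T : Submodule L (Fin r → L))
    (htangent : {P | P ∈ BSet L (V : Set (Fin r → L)) ∧ P ≤ U} = {T})
    (hext : ∀ H : Submodule K (Fin r → L), H ≤ V → Module.finrank K H = r - 1 →
      ¬ U ≤ Submodule.span L (H : Set (Fin r → L)))
    (A : Set (Submodule L (Fin r → L))) (hTA : T ∉ A)
    (hsplash : Splash K L V U r = insert T A)
    (P : Submodule L (Fin r → L)) (hP : P ∈ A) :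
    ∃ u v : Fin r → L, u ∈ U ∧ v ∈ U ∧
      ∃ ρ : Fin (r - 2) → L,
        LinearIndependent K (Fin.cons (1 : L) ρ : Fin (r - 2 + 1) → L) ∧
        T = Submodule.span L {u} ∧ P = Submodule.span L {v} ∧
        A = {Q | ∃ (x : K) (y : Fin (r - 2) → K),
          Q = Submodule.span L
            {(algebraMap K L x + ∑ i, algebraMap K L (y i) * ρ i) • u + v}} := by
  classical
  haveI : Module.Finite K L := Module.Finite.of_finite
  haveI : Module.Finite K V := by infer_instance
  obtain ⟨eb, heV, hspanKe⟩ := exists_good_basis V hVrank hVspan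
  have hmemV : ∀ x, x ∈ V ↔ ∃ c : Fin r → K, ∑ i, c i • eb i = x := by
    intro x
    rw [← hspanKe]
    exact mem_span_range_iff_exists_fun K
  have hchar : ∀ w : Fin r → L, w ≠ 0 → (Submodule.span L {w} ∈ Splash K L V U r ↔
      w ∈ U ∧ ∃ a : Fin r → K, a ≠ 0 ∧ funl eb a w = 0) := by
    intro w hw
    constructor
    · rintro ⟨hfin, hPU, H, hHV, hHrank, hPH⟩
      have hwU : w ∈ U := hPU (Submodule.mem_span_singleton_self w)
      have hne : Submodule.span L (H : Set (Fin r → L)) ≠ ⊤ :=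
        fun h => hext H hHV hHrank (h ▸ le_top)
      obtain ⟨a, ha, hker⟩ := exists_functional eb V heV hVrank hVspan hHV hHrank hr hne
      exact ⟨hwU, a, ha, hker (hPH (Submodule.mem_span_singleton_self w))⟩
    · rintro ⟨hwU, a, ha, hfa⟩
      obtain ⟨H, hHV, hHrank, hker⟩ := exists_hyperplane eb V heV hVrank hr ha
      refine ⟨finrank_span_singleton hw, ?_, H, hHV, hHrank, le_trans ?_ hker⟩
      · rwa [Submodule.span_singleton_le_iff_mem]
      · rw [Submodule.span_singleton_le_iff_mem]
        exact LinearMap.mem_ker.2 hfa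
  have hextf : ∀ a : Fin r → K, a ≠ 0 → ¬ U ≤ LinearMap.ker (funl eb a) := by
    intro a ha hUk
    obtain ⟨H, hHV, hHrank, hker⟩ := exists_hyperplane eb V heV hVrank hr ha
    exact hext H hHV hHrank (hUk.trans hker)
  -- the centre T
  have hTmem : T ∈ BSet L (V : Set (Fin r → L)) ∧ T ≤ U := by
    have h1 : T ∈ {P | P ∈ BSet L (V : Set (Fin r → L)) ∧ P ≤ U} := by
      rw [htangent]; rfl
    exact h1
  obtain ⟨⟨u, huV, hu0, hTu⟩, hTU⟩ := hTmem
  have huU : u ∈ U := hTU (by rw [hTu]; exact Submodule.mem_span_singleton_self u)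
  -- the point P
  have hPS : P ∈ Splash K L V U r := by rw [hsplash]; exact Set.mem_insert_of_mem _ hP
  obtain ⟨hPfin, hPU, -⟩ := hPS
  obtain ⟨v₀, hv₀0, hPv⟩ := exists_span_of_finrank_one P hPfin
  have hv₀U : v₀ ∈ U := hPU (by rw [hPv]; exact Submodule.mem_span_singleton_self v₀)
  have hPT : P ≠ T := fun h => hTA (h ▸ hP)
  have hv₀u : v₀ ∉ Submodule.span L {u} := by
    intro h
    apply hPT
    rw [hPv, hTu]
    apply Submodule.eq_of_le_of_finrank_eq
    · rwa [Submodule.span_singleton_le_iff_mem]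
    · rw [finrank_span_singleton hv₀0, finrank_span_singleton hu0]
  -- U is spanned by u and v₀
  have hUspan : Submodule.span L {u, v₀} = U := by
    apply Submodule.eq_of_le_of_finrank_eq
    · rw [Submodule.span_le]
      intro x hx
      simp only [Set.mem_insert_iff, Set.mem_singleton_iff] at hx
      rcases hx with rfl | rfl
      · exact huU
      · exact hv₀U
    · have hinf : Submodule.span L {u} ⊓ Submodule.span L {v₀} = ⊥ := by
        rw [eq_bot_iff]
        rintro y ⟨hy1, hy2⟩
        obtain ⟨t, ht⟩ := Submodule.mem_span_singleton.mp hy2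
        by_cases hy : y = 0
        · simp [hy]
        · exfalso
          apply hv₀u
          have htz : t ≠ 0 := fun h0 => hy (by rw [← ht, h0, zero_smul])
          have h5 : v₀ = t⁻¹ • y := by rw [← ht, smul_smul, inv_mul_cancel₀ htz, one_smul]
          rw [h5]
          exact Submodule.smul_mem _ _ hy1
      have h2 := Submodule.finrank_sup_add_finrank_inf_eq
        (Submodule.span L {u}) (Submodule.span L {v₀})
      rw [hinf, finrank_bot, finrank_span_singleton hu0, finrank_span_singleton hv₀0] at h2
      have h3 : Submodule.span L {u, v₀} =
          Submodule.span L {u} ⊔ Submodule.span L {v₀} := by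
        rw [← Submodule.span_union, Set.singleton_union]
      rw [hU, h3]
      omega
  -- coordinates of u
  obtain ⟨c, hcu⟩ := (hmemV u).mp huV
  have hc0 : c ≠ 0 := by
    rintro rfl
    apply hu0
    rw [← hcu]
    simp
  -- the linear forms δ and ψ
  set δ : (Fin r → K) →ₗ[K] K := ∑ i, c i • LinearMap.proj i with hδdef
  have hδ : ∀ a, δ a = ∑ i, c i * a i := by
    intro a
    rw [hδdef]
    simp [LinearMap.sum_apply, smul_eq_mul]
  have hfu : ∀ a, funl eb a u = algebraMap K L (δ a) := by
    intro a
    rw [← hcu, funl_sum, hδ]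
  set ψ : (Fin r → K) →ₗ[K] L :=
    { toFun := fun a => funl eb a v₀,
      map_add' := fun a b => by
        show funl eb (a + b) v₀ = funl eb a v₀ + funl eb b v₀
        rw [map_add, LinearMap.add_apply],
      map_smul' := fun k a => by
        show funl eb (k • a) v₀ = k • funl eb a v₀
        rw [map_smul, LinearMap.smul_apply] } with hψdef
  have hψa : ∀ a, ψ a = funl eb a v₀ := fun a => rfl
  -- nondegeneracy
  have hnondeg : ∀ a : Fin r → K, δ a = 0 → ψ a = 0 → a = 0 := by
    intro a hδa hψ0
    by_contra ha
    apply hextf a ha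
    rw [← hUspan, Submodule.span_le]
    intro x hx
    simp only [Set.mem_insert_iff, Set.mem_singleton_iff] at hx
    rcases hx with rfl | rfl
    · exact LinearMap.mem_ker.2 (by rw [hfu, hδa, map_zero])
    · exact LinearMap.mem_ker.2 (by rw [← hψa]; exact hψ0)
  -- rank computations
  obtain ⟨i₁, hi₁⟩ : ∃ i, c i ≠ 0 := by
    by_contra h; push_neg at h; exact hc0 (funext h)
  have hδsurj : LinearMap.range δ = ⊤ := by
    rw [LinearMap.range_eq_top]
    intro k
    refine ⟨(k * (c i₁)⁻¹) • (Pi.single i₁ 1 : Fin r → K), ?_⟩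
    rw [map_smul, smul_eq_mul]
    have h6 : δ (Pi.single i₁ 1 : Fin r → K) = c i₁ := by
      rw [hδ, Finset.sum_eq_single i₁]
      · simp
      · intro j _ hj
        simp [Pi.single_apply, hj]
      · simp
    rw [h6, mul_assoc, inv_mul_cancel₀ hi₁, mul_one]
  have hkerδ : finrank K (LinearMap.ker δ) = r - 1 := by
    have h := LinearMap.finrank_range_add_finrank_ker δ
    rw [hδsurj] at h
    simp only [finrank_top, Module.finrank_self] at h
    have hpi : finrank K (Fin r → K) = r := by simp
    rw [hpi] at h
    omega
  set M : Submodule K L := Submodule.map ψ (LinearMap.ker δ) with hMdef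
  have hMrank : finrank K M = r - 1 := by
    have h := LinearMap.finrank_range_add_finrank_ker (ψ.domRestrict (LinearMap.ker δ))
    have hker0 : LinearMap.ker (ψ.domRestrict (LinearMap.ker δ)) = ⊥ := by
      rw [eq_bot_iff]
      rintro ⟨a, haδ⟩ h0
      have h1 : ψ a = 0 := h0
      have h2 : a = 0 := hnondeg a (LinearMap.mem_ker.mp haδ) h1
      exact Submodule.mem_bot _ |>.2 (Subtype.ext h2)
    rw [LinearMap.range_domRestrict, hker0, finrank_bot, hkerδ] at h
    rw [hMdef]
    omega
  -- injectivity of the parametrization s ↦ span{s•u+v₀}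
  have hQinj : ∀ s t : L, Submodule.span L {s • u + v₀} = Submodule.span L {t • u + v₀} →
      s = t := by
    intro s t h
    have h1 : s • u + v₀ ∈ Submodule.span L {t • u + v₀} := by
      rw [← h]; exact Submodule.mem_span_singleton_self _
    obtain ⟨k, hk⟩ := Submodule.mem_span_singleton.mp h1
    have h2 : (k * t - s) • u + (k - 1) • v₀ = 0 := by
      rw [smul_add, smul_smul] at hk
      calc (k * t - s) • u + (k - 1) • v₀
          = ((k * t) • u + k • v₀) - (s • u + v₀) := by
            rw [sub_smul, sub_smul, one_smul]; abel
        _ = 0 := by rw [hk]; abel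
    by_cases hk1 : k = 1
    · rw [hk1, sub_self, zero_smul, add_zero, one_mul] at h2
      rcases smul_eq_zero.mp h2 with h3 | h3
      · exact (sub_eq_zero.mp h3).symm
      · exact absurd h3 hu0
    · exfalso
      apply hv₀u
      have h4 : (k - 1) • v₀ = -((k * t - s) • u) :=
        eq_neg_of_add_eq_zero_left (by rw [add_comm] at h2; exact h2)
      have hk1' : k - 1 ≠ 0 := sub_ne_zero.mpr hk1
      have h5 : v₀ = ((k - 1)⁻¹ * -(k * t - s)) • u := by
        rw [mul_smul, neg_smul, ← h4, smul_smul, inv_mul_cancel₀ hk1', one_smul]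
      rw [h5]
      exact Submodule.smul_mem _ _ (Submodule.mem_span_singleton_self u)
  -- characterization of A
  have hA : ∀ Q, Q ∈ A ↔ ∃ s : L, (∃ a : Fin r → K, δ a = 1 ∧ ψ a = -s) ∧
      Q = Submodule.span L {s • u + v₀} := by
    intro Q
    constructor
    · intro hQ
      have hQT : Q ≠ T := fun h => hTA (h ▸ hQ)
      have hQS : Q ∈ Splash K L V U r := by rw [hsplash]; exact Set.mem_insert_of_mem _ hQ
      obtain ⟨wq, hwq0, hQw⟩ := exists_span_of_finrank_one Q hQS.1
      have hQS' : Submodule.span L {wq} ∈ Splash K L V U r := hQw ▸ hQS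
      obtain ⟨hwqU, a, ha, hfa⟩ := (hchar wq hwq0).mp hQS'
      have hwpair : wq ∈ Submodule.span L {u, v₀} := by rw [hUspan]; exact hwqU
      obtain ⟨α, β, hαβ⟩ := Submodule.mem_span_pair.mp hwpair
      have he : α * algebraMap K L (δ a) + β * ψ a = 0 := by
        rw [← hαβ] at hfa
        rw [map_add, map_smul, map_smul, smul_eq_mul, smul_eq_mul, hfu] at hfa
        rw [hψa]
        exact hfa
      have hβ : β ≠ 0 := by
        intro h0
        rw [h0, zero_smul, add_zero] at hαβ
        have hα : α ≠ 0 := fun h => hwq0 (by rw [← hαβ, h, zero_smul])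
        apply hQT
        rw [hQw, ← hαβ, Submodule.span_singleton_smul_eq (isUnit_iff_ne_zero.2 hα) u, ← hTu]
      have hδa : δ a ≠ 0 := by
        intro h0
        apply ha
        apply hnondeg a h0
        rw [h0, map_zero, mul_zero, zero_add] at he
        rcases mul_eq_zero.mp he with h | h
        · exact absurd h hβ
        · exact h
      have hAδ : algebraMap K L (δ a) ≠ 0 :=
        fun h => hδa (RingHom.injective (algebraMap K L) (by rw [h, map_zero]))
      refine ⟨β⁻¹ * α, ⟨(δ a)⁻¹ • a, ?_, ?_⟩, ?_⟩
      · rw [map_smul, smul_eq_mul, inv_mul_cancel₀ hδa]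
      · rw [map_smul, Algebra.smul_def, map_inv₀]
        have h2 : ψ a = -(α * algebraMap K L (δ a)) / β := by
          rw [eq_div_iff hβ]
          linear_combination he
        rw [h2]
        field_simp
      · rw [hQw]
        have h7 : β⁻¹ • wq = (β⁻¹ * α) • u + v₀ := by
          rw [← hαβ, smul_add, smul_smul, smul_smul, inv_mul_cancel₀ hβ, one_smul]
        rw [← h7, Submodule.span_singleton_smul_eq (isUnit_iff_ne_zero.2 (inv_ne_zero hβ)) wq]
    · rintro ⟨s, ⟨a, hδ1, hψs⟩, rfl⟩
      have ha : a ≠ 0 := fun h => one_ne_zero (α := K) (by rw [← hδ1, h, map_zero])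
      have hw0 : s • u + v₀ ≠ 0 := by
        intro h
        apply hv₀u
        have h5 : v₀ = (-s) • u := by rw [neg_smul]; exact eq_neg_of_add_eq_zero_right h
        rw [h5]
        exact Submodule.smul_mem _ _ (Submodule.mem_span_singleton_self u)
      have hwU : s • u + v₀ ∈ U := U.add_mem (U.smul_mem s huU) hv₀U
      have hf0 : funl eb a (s • u + v₀) = 0 := by
        rw [map_add, map_smul, smul_eq_mul, hfu, hδ1, map_one, mul_one, ← hψa, hψs,
          add_neg_cancel]
      have hQS : Submodule.span L {s • u + v₀} ∈ Splash K L V U r :=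
        (hchar _ hw0).mpr ⟨hwU, a, ha, hf0⟩
      rw [hsplash] at hQS
      rcases Set.mem_insert_iff.mp hQS with heq | hin
      · exfalso
        apply hv₀u
        have h8 : s • u + v₀ ∈ Submodule.span L {u} := by
          rw [← hTu, ← heq]
          exact Submodule.mem_span_singleton_self _
        have h9 : v₀ = (s • u + v₀) - s • u := by abel
        rw [h9]
        exact Submodule.sub_mem _ h8
          (Submodule.smul_mem _ _ (Submodule.mem_span_singleton_self u))
      · exact hin
  -- normalize: P corresponds to s = 0
  obtain ⟨s₁, ⟨a₁, hδa₁, hψa₁⟩, hPs₁⟩ := (hA P).mp hP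
  have hs₁0 : s₁ = 0 := by
    apply hQinj s₁ 0
    rw [← hPs₁, zero_smul, zero_add, ← hPv]
  have hψa₁0 : ψ a₁ = 0 := by rw [hψa₁, hs₁0, neg_zero]
  -- the parameter set is exactly M
  have hSM : ∀ s : L, (∃ a : Fin r → K, δ a = 1 ∧ ψ a = -s) ↔ s ∈ M := by
    intro s
    constructor
    · rintro ⟨a, hδ1, hψs⟩
      refine ⟨a₁ - a, ?_, ?_⟩
      · show δ (a₁ - a) = 0
        rw [map_sub, hδa₁, hδ1, sub_self]
      · rw [map_sub, hψa₁0, hψs, zero_sub, neg_neg]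
    · rintro ⟨b, hb, rfl⟩
      have hb' : δ b = 0 := hb
      refine ⟨a₁ - b, ?_, ?_⟩
      · rw [map_sub, hδa₁, hb', sub_zero]
      · rw [map_sub, hψa₁0, zero_sub]
  -- a nonzero element of M
  obtain ⟨lam, hlamM, hlam0⟩ : ∃ lam ∈ M, lam ≠ (0 : L) := by
    by_contra h
    push_neg at h
    have hMbot : M = ⊥ := eq_bot_iff.2 fun x hx => (Submodule.mem_bot K).2 (h x hx)
    rw [hMbot, finrank_bot] at hMrank
    omega
  -- rescale: M' = lam⁻¹ • M contains 1
  set μ : L →ₗ[K] L := LinearMap.mulLeft K lam⁻¹ with hμdef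
  have hμinj : Function.Injective μ := by
    intro x y h
    have : lam⁻¹ * x = lam⁻¹ * y := h
    exact mul_left_cancel₀ (inv_ne_zero hlam0) this
  set M' : Submodule K L := Submodule.map μ M with hM'def
  have hM'rank : finrank K M' = r - 1 := by
    rw [hM'def, ← hMrank]
    exact ((Submodule.equivMapOfInjective μ hμinj M).symm.finrank_eq)
  have h1M' : (1 : L) ∈ M' := ⟨lam, hlamM, by
    show lam⁻¹ * lam = 1
    exact inv_mul_cancel₀ hlam0⟩
  -- a basis of M' starting with 1
  set o : M' := ⟨(1 : L), h1M'⟩ with hodef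
  have ho0 : o ≠ 0 := fun h => one_ne_zero (α := L) (congrArg Subtype.val h)
  obtain ⟨N, hN⟩ := Submodule.exists_isCompl (Submodule.span K {o})
  have hNrank : finrank K N = r - 2 := by
    have h := Submodule.finrank_add_eq_of_isCompl hN
    rw [finrank_span_singleton ho0, hM'rank] at h
    omega
  haveI : Module.Free K N := Module.Free.of_divisionRing K N
  let bN : Basis (Fin (r - 2)) K N := Module.finBasisOfFinrankEq K N hNrank
  set bN' : Fin (r - 2) → M' := fun i => (bN i : M') with hbN'def
  have hbN'ind : LinearIndependent K bN' := by
    have h1 := bN.linearIndependent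
    have h2 : LinearIndependent K (fun i => (bN i : M')) := by
      exact h1.map_injOn N.subtype (Subtype.val_injective.injOn)
    exact h2
  have hbN'span : Submodule.span K (Set.range bN') = N := by
    have h1 : Submodule.map N.subtype (Submodule.span K (Set.range bN)) =
        Submodule.span K (Set.range bN') := by
      rw [Submodule.map_span]
      congr 1
      rw [← Set.range_comp]
      rfl
    rw [bN.span_eq, Submodule.map_top, Submodule.range_subtype] at h1
    exact h1.symm
  have hoN : o ∉ Submodule.span K (Set.range bN') := by
    rw [hbN'span]
    intro h
    have h2 : o ∈ (⊥ : Submodule K M') :=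
      hN.disjoint.le_bot ⟨Submodule.mem_span_singleton_self o, h⟩
    exact ho0 ((Submodule.mem_bot K).mp h2)
  have hconsind : LinearIndependent K (Fin.cons o bN' : Fin (r - 2 + 1) → M') :=
    linearIndependent_fin_cons.mpr ⟨hbN'ind, hoN⟩
  set ρ : Fin (r - 2) → L := fun i => ((bN' i : L)) with hρdef
  have hcomp : (M'.subtype) ∘ (Fin.cons o bN' : Fin (r - 2 + 1) → M') =
      (Fin.cons (1 : L) ρ : Fin (r - 2 + 1) → L) := by
    funext j
    refine Fin.cases ?_ (fun i => ?_) j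
    · simp [hodef]
    · simp [hρdef]
  have hρind : LinearIndependent K (Fin.cons (1 : L) ρ : Fin (r - 2 + 1) → L) := by
    have h1 : LinearIndependent K (M'.subtype ∘ (Fin.cons o bN' : Fin (r - 2 + 1) → M')) := by
      exact hconsind.map_injOn M'.subtype (Subtype.val_injective.injOn)
    rwa [hcomp] at h1
  have hρspan : Submodule.span K (Set.range (Fin.cons (1 : L) ρ : Fin (r - 2 + 1) → L)) =
      M' := by
    have h1 : Submodule.span K (Set.range (Fin.cons o bN' : Fin (r - 2 + 1) → M')) = ⊤ := by
      rw [Fin.range_cons, Submodule.span_insert, hbN'span]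
      exact hN.codisjoint.eq_top
    have h2 : Submodule.map M'.subtype
        (Submodule.span K (Set.range (Fin.cons o bN' : Fin (r - 2 + 1) → M'))) =
        Submodule.span K (Set.range (Fin.cons (1 : L) ρ : Fin (r - 2 + 1) → L)) := by
      rw [Submodule.map_span]
      congr 1
      rw [← Set.range_comp, hcomp]
    rw [h1, Submodule.map_top, Submodule.range_subtype] at h2
    exact h2.symm
  have hM'param : ∀ t : L, t ∈ M' ↔ ∃ (x : K) (y : Fin (r - 2) → K),
      t = algebraMap K L x + ∑ i, algebraMap K L (y i) * ρ i := by
    intro t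
    rw [← hρspan, mem_span_range_iff_exists_fun K]
    constructor
    · rintro ⟨cc, hcc⟩
      refine ⟨cc 0, fun i => cc i.succ, ?_⟩
      rw [← hcc, Fin.sum_univ_succ]
      congr 1
      · rw [Fin.cons_zero, Algebra.algebraMap_eq_smul_one]
      · congr 1
        funext i
        rw [Fin.cons_succ, Algebra.smul_def]
    · rintro ⟨x, y, rfl⟩
      refine ⟨Fin.cons x y, ?_⟩
      rw [Fin.sum_univ_succ]
      congr 1
      · rw [Fin.cons_zero, Fin.cons_zero, Algebra.algebraMap_eq_smul_one]
      · congr 1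
        funext i
        rw [Fin.cons_succ, Fin.cons_succ, Algebra.smul_def]
  -- final assembly
  refine ⟨lam • u, v₀, U.smul_mem lam huU, hv₀U, ρ, hρind, ?_, hPv, ?_⟩
  · rw [Submodule.span_singleton_smul_eq (isUnit_iff_ne_zero.2 hlam0) u]
    exact hTu
  · ext Q
    simp only [Set.mem_setOf_eq]
    constructor
    · intro hQ
      obtain ⟨s, hsa, hQs⟩ := (hA Q).mp hQ
      have hsM : s ∈ M := (hSM s).mp hsa
      have htM' : lam⁻¹ * s ∈ M' := ⟨s, hsM, rfl⟩
      obtain ⟨x, y, hxy⟩ := (hM'param _).mp htM'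
      refine ⟨x, y, ?_⟩
      rw [hQs, ← hxy]
      have h10 : (lam⁻¹ * s) • (lam • u) = s • u := by
        rw [smul_smul]
        congr 1
        field_simp
      rw [h10]
    · rintro ⟨x, y, rfl⟩
      have htM' : (algebraMap K L x + ∑ i, algebraMap K L (y i) * ρ i) ∈ M' :=
        (hM'param _).mpr ⟨x, y, rfl⟩
      obtain ⟨s, hsM, hst⟩ := htM'
      refine (hA _).mpr ⟨s, (hSM s).mpr hsM, ?_⟩
      have hst' : lam⁻¹ * s = algebraMap K L x + ∑ i, algebraMap K L (y i) * ρ i := hst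
      rw [← hst']
      have h10 : (lam⁻¹ * s) • (lam • u) = s • u := by
        rw [smul_smul]
        congr 1
        field_simp
      rw [h10]
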